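/- arXiv:2507.16747 — 5 statements merged into one kernel-verified Lean document; each statement's English description precedes it below -/
import Mathlib

section
/- For any finite words w and w' in the generators σ₁, σ₂ of the 3-strand braid group B₃ such that w' is a subword of w (a not-necessarily-contiguous subsequence), the element (∏w)·(∏w')⁻¹ ∈ B₃ is quasipositive. (This is the deletion principle underlying the 'if' direction of Orevkov's criterion as used in the paper: deleting letters from a positive word so that the deleted-to word equals δ exhibits (∏w)·δ⁻¹ as a product of conjugates of generators.) -/
/-- The braid relation σ₁σ₂σ₁ = σ₂σ₁σ₂ as a relator in the free group on two generators. -/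
def braidRel : Set (FreeGroup (Fin 2)) :=
  {FreeGroup.of 0 * FreeGroup.of 1 * FreeGroup.of 0 *
    (FreeGroup.of 1 * FreeGroup.of 0 * FreeGroup.of 1)⁻¹}

/-- The 3-strand braid group B₃. -/
abbrev B₃ := PresentedGroup braidRel

/-- The Artin generator σ₁. -/
def σ₁ : B₃ := PresentedGroup.of 0

/-- The Artin generator σ₂. -/
def σ₂ : B₃ := PresentedGroup.of 1

/-- The Garside element Δ = σ₁σ₂σ₁. -/
def Δ : B₃ := σ₁ * σ₂ * σ₁

/-- β ∈ B₃ is quasipositive if it is a finite product of conjugates of the generators. -/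
def Quasipositive (β : B₃) : Prop :=
  ∃ l : List (B₃ × B₃),
    (∀ p ∈ l, p.2 = σ₁ ∨ p.2 = σ₂) ∧
    β = (l.map fun p => p.1 * p.2 * p.1⁻¹).prod

lemma qp_one : Quasipositive 1 := ⟨[], by simp, by simp⟩

lemma qp_gen {x : B₃} (h : x = σ₁ ∨ x = σ₂) : Quasipositive x :=
  ⟨[(1, x)], by simpa using h, by simp⟩

lemma qp_mul {a b : B₃} (ha : Quasipositive a) (hb : Quasipositive b) :
    Quasipositive (a * b) := by
  obtain ⟨l, hl, rfl⟩ := ha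
  obtain ⟨m, hm, rfl⟩ := hb
  exact ⟨l ++ m, fun p hp => (List.mem_append.1 hp).elim (hl p) (hm p), by simp⟩

lemma qp_conj {x : B₃} (g : B₃) (hx : Quasipositive x) :
    Quasipositive (g * x * g⁻¹) := by
  obtain ⟨l, hl, rfl⟩ := hx
  refine ⟨l.map fun p => (g * p.1, p.2), ?_, ?_⟩
  · intro p hp
    obtain ⟨q, hq, rfl⟩ := List.mem_map.1 hp
    exact hl q hq
  · induction l with
    | nil => simp
    | cons q t ih =>
      have ih' := ih (fun p hp => hl p (List.mem_cons_of_mem _ hp))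
      simp only [List.map_cons, List.prod_cons] at *
      rw [show g * (q.1 * q.2 * q.1⁻¹ * (t.map fun p => p.1 * p.2 * p.1⁻¹).prod) * g⁻¹
          = (g * (q.1 * q.2 * q.1⁻¹) * g⁻¹) *
            (g * (t.map fun p => p.1 * p.2 * p.1⁻¹).prod * g⁻¹) by group, ih']
      simp [mul_assoc]

/-- Deletion principle: if `w'` is a sublist of a positive word `w`, then `(∏ w) · (∏ w')⁻¹`
is quasipositive. -/
theorem deletion_quasipositive (w w' : List B₃) (hw : ∀ x ∈ w, x = σ₁ ∨ x = σ₂)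
    (hsub : w'.Sublist w) :
    Quasipositive (w.prod * w'.prod⁻¹) := by
  induction hsub with
  | slnil => simpa using qp_one
  | cons a h ih =>
    rename_i l₁ l₂
    have ha := hw a List.mem_cons_self
    have ih' := ih (fun x hx => hw x (List.mem_cons_of_mem _ hx))
    simp only [List.prod_cons]
    rw [mul_assoc, show a * (l₂.prod * l₁.prod⁻¹)
        = (a * (l₂.prod * l₁.prod⁻¹) * a⁻¹) * a by group]
    exact qp_mul (qp_conj a ih') (qp_gen ha)
  | cons_cons a h ih =>
    rename_i l₁ l₂
    have ih' := ih (fun x hx => hw x (List.mem_cons_of_mem _ hx))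
    simp only [List.prod_cons]
    have : a * l₂.prod * (a * l₁.prod)⁻¹ = a * (l₂.prod * l₁.prod⁻¹) * a⁻¹ := by group
    rw [mul_assoc, ← mul_assoc, this]
    exact qp_conj a ih'
end

section
/- The 3-braid σ₁²σ₂²σ₁²σ₂²·Δ⁻² is quasipositive, i.e., it is a finite product of conjugates of the generators σ₁, σ₂ in B₃. (This is the base case of the paper's proof of Proposition 4.1; it follows from Orevkov's criterion since deleting one σ₂ from each σ₂²-block of σ₁²σ₂²σ₁²σ₂² yields a word equal to Δ².) -/
lemma braid_eq : σ₁ * σ₂ * σ₁ = σ₂ * σ₁ * σ₂ := by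
  have hmem : (FreeGroup.of 0 * FreeGroup.of 1 * FreeGroup.of 0 *
      (FreeGroup.of 1 * FreeGroup.of 0 * FreeGroup.of 1)⁻¹ : FreeGroup (Fin 2)) ∈
      Subgroup.normalClosure braidRel :=
    Subgroup.subset_normalClosure rfl
  have h1 : PresentedGroup.mk braidRel (FreeGroup.of 0 * FreeGroup.of 1 * FreeGroup.of 0 *
      (FreeGroup.of 1 * FreeGroup.of 0 * FreeGroup.of 1)⁻¹) = 1 :=
    (QuotientGroup.eq_one_iff _).mpr hmem
  simp only [map_mul, map_inv] at h1
  have h1' : σ₁ * σ₂ * σ₁ * (σ₂ * σ₁ * σ₂)⁻¹ = 1 := h1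
  exact mul_inv_eq_one.mp h1'

lemma delta_sq : Δ ^ (2 : ℤ) = σ₁ ^ 2 * σ₂ * σ₁ ^ 2 * σ₂ := by
  symm
  calc σ₁ ^ 2 * σ₂ * σ₁ ^ 2 * σ₂ = σ₁ * (σ₁ * σ₂ * σ₁) * (σ₁ * σ₂) := by
        simp [pow_two, mul_assoc]
    _ = σ₁ * (σ₂ * σ₁ * σ₂) * (σ₁ * σ₂) := by rw [braid_eq]
    _ = σ₁ * σ₂ * σ₁ * (σ₂ * σ₁ * σ₂) := by simp [mul_assoc]
    _ = σ₁ * σ₂ * σ₁ * (σ₁ * σ₂ * σ₁) := by rw [← braid_eq]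
    _ = Δ ^ (2 : ℤ) := by simp [Δ, zpow_two, pow_two, mul_assoc]

/-- The 3-braid σ₁²σ₂²σ₁²σ₂²·Δ⁻² is quasipositive. -/
theorem quasipositive_base_case :
    Quasipositive (σ₁ ^ 2 * σ₂ ^ 2 * σ₁ ^ 2 * σ₂ ^ 2 * Δ ^ (-2 : ℤ)) := by
  refine ⟨[(σ₁ ^ 2 * σ₂, σ₂), (Δ ^ (2 : ℤ), σ₂)], by simp, ?_⟩
  have h : Δ ^ (-2 : ℤ) = (Δ ^ (2 : ℤ))⁻¹ := by group
  simp only [List.map, List.prod_cons, List.prod_nil, mul_one]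
  rw [h, delta_sq]
  simp [pow_two, mul_assoc]
end

section
/- Uniqueness of the Garside normal form in the 3-strand braid group: if β₊ · Δ^m = β₊' · Δ^{m'} in B₃, where β₊, β₊' belong to the positive braid monoid B₃⁺ and both are Δ-free (neither admits a factorization u·Δ·v with u, v ∈ B₃⁺), then m = m' and β₊ = β₊'. (Stated in Section 2.1 of the paper, citing Orevkov: the Garside presentation β = β₊Δ^m is unique up to the Artin relation.) -/
/-- An element of the positive braid monoid is Δ-free if it admits no factorization u·Δ·v
with u, v positive. -/
def DeltaFree (g : B₃) : Prop :=
  ¬ ∃ u v : B₃, u ∈ Submonoid.closure ({σ₁, σ₂} : Set B₃) ∧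
      v ∈ Submonoid.closure ({σ₁, σ₂} : Set B₃) ∧ g = u * Δ * v

lemma delta_mem : Δ ∈ Submonoid.closure ({σ₁, σ₂} : Set B₃) := by
  have h1 : σ₁ ∈ Submonoid.closure ({σ₁, σ₂} : Set B₃) :=
    Submonoid.subset_closure (by simp)
  have h2 : σ₂ ∈ Submonoid.closure ({σ₁, σ₂} : Set B₃) :=
    Submonoid.subset_closure (by simp)
  exact mul_mem (mul_mem h1 h2) h1

/-- Uniqueness of the Garside normal form in B₃. -/
theorem garside_normal_form_unique (m m' : ℤ) (βp βp' : B₃)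
    (hβp : βp ∈ Submonoid.closure ({σ₁, σ₂} : Set B₃))
    (hβp' : βp' ∈ Submonoid.closure ({σ₁, σ₂} : Set B₃))
    (hfree : DeltaFree βp) (hfree' : DeltaFree βp')
    (h : βp * Δ ^ m = βp' * Δ ^ m') :
    m = m' ∧ βp = βp' := by
  rcases lt_trichotomy m m' with hlt | heq | hlt
  · exfalso
    apply hfree
    set k : ℕ := (m' - m - 1).toNat with hk
    have hk1 : (k : ℤ) + 1 = m' - m := by
      rw [hk]; omega
    have hβ : βp = βp' * Δ ^ (m' - m) := by
      have := mul_right_cancel (b := Δ ^ m)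
        (a := βp) (c := βp' * Δ ^ (m' - m))
      apply this
      rw [h, mul_assoc, ← zpow_add]
      ring_nf
    refine ⟨βp' * Δ ^ k, 1, mul_mem hβp' (pow_mem delta_mem k),
      Submonoid.one_mem _, ?_⟩
    rw [mul_one, hβ, ← hk1, zpow_add, zpow_one, zpow_natCast, mul_assoc]
  · refine ⟨heq, ?_⟩
    subst heq
    exact mul_right_cancel h
  · exfalso
    apply hfree'
    set k : ℕ := (m - m' - 1).toNat with hk
    have hk1 : (k : ℤ) + 1 = m - m' := by
      rw [hk]; omega
    have hβ : βp' = βp * Δ ^ (m - m') := by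
      have := mul_right_cancel (b := Δ ^ m')
        (a := βp') (c := βp * Δ ^ (m - m'))
      apply this
      rw [← h, mul_assoc, ← zpow_add]
      ring_nf
    refine ⟨βp * Δ ^ k, 1, mul_mem hβp (pow_mem delta_mem k),
      Submonoid.one_mem _, ?_⟩
    rw [mul_one, hβ, ← hk1, zpow_add, zpow_one, zpow_natCast, mul_assoc]
end

section
/- Conjugation does not increase the Δ-exponent of a 3-braid in the alternating normal form of Equation (1): let m be an integer and let β = (∏_{i=1}^{s} σ₁^{a_i}σ₂^{b_i})·Δ^m with s ≥ 1 and all a_i, b_i ≥ 2 in case m is even, or β = (∏_{i=1}^{s} σ₁^{a_i}σ₂^{b_i})·σ₁^{a_{s+1}}·Δ^m with s ≥ 0 and all a_i, b_i ≥ 2 in case m is odd. Then for every α ∈ B₃ and every integer m' such that α β α⁻¹ · Δ^{-m'} lies in the positive braid monoid B₃⁺, one has m' ≤ m. (This is the paper's claim in Section 2.1 that m in Equation (1) is greatest among all braid word presentations of the conjugacy class: conjugating β in the form of Equation (1) does not increase m.) -/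
open Monoid

abbrev C2 := Multiplicative (ZMod 2)
abbrev C3 := Multiplicative (ZMod 3)

def Fam : Bool → Type
  | true => C2
  | false => C3

instance (b : Bool) : Group (Fam b) := by cases b <;> (unfold Fam; infer_instance)
instance (b : Bool) : DecidableEq (Fam b) := by cases b <;> (unfold Fam; infer_instance)
instance (b : Bool) : Fintype (Fam b) := by cases b <;> (unfold Fam; infer_instance)

abbrev Γ := Monoid.CoprodI Fam

def xg : Fam true := Multiplicative.ofAdd (1 : ZMod 2)
def yg : Fam false := Multiplicative.ofAdd (1 : ZMod 3)
def yg2 : Fam false := Multiplicative.ofAdd (2 : ZMod 3)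

def X : Γ := CoprodI.of xg
def Y : Γ := CoprodI.of yg

-- syllables
abbrev S := (Σ b, Fam b)
def sx : S := ⟨true, xg⟩
def sy : S := ⟨false, yg⟩
def sy2 : S := ⟨false, yg2⟩

def wfn : S → ℕ := fun l =>
  match l with
  | ⟨true, _⟩ => 0
  | ⟨false, m⟩ => if m = yg then 1 else 2

noncomputable def Wt (g : Γ) : ℕ := ((CoprodI.Word.equiv g).toList.map wfn).sum

lemma equiv_prod (w : CoprodI.Word Fam) : CoprodI.Word.equiv w.prod = w :=
  CoprodI.Word.equiv.apply_symm_apply w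

lemma prod_equiv (g : Γ) : (CoprodI.Word.equiv g).prod = g :=
  CoprodI.Word.equiv.symm_apply_apply g

lemma Wt_of_word (w : CoprodI.Word Fam) : Wt w.prod = (w.toList.map wfn).sum := by
  rw [Wt, equiv_prod]

lemma Wt_one : Wt (1 : Γ) = 0 := by
  have : (1:Γ) = (CoprodI.Word.empty).prod := by simp
  rw [this, Wt_of_word]; rfl

lemma key_wfn : ∀ (i : Bool) (u v : Fam i), u ≠ 1 → v ≠ 1 → u * v ≠ 1 →
    wfn ⟨i, u * v⟩ ≤ wfn ⟨i, u⟩ + wfn ⟨i, v⟩ := by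
  intro i
  cases i
  · intro u v
    revert u v
    decide
  · intro u v _ _ _
    simp [wfn]

lemma word_prod_mk (L : List S) (h1) (h2) :
    (⟨L, h1, h2⟩ : CoprodI.Word Fam).prod = (L.map fun l => CoprodI.of l.snd).prod := rfl

lemma Wt_of_mul_word (i : Bool) (m : Fam i) (hm : m ≠ 1) (w : CoprodI.Word Fam) :
    Wt (CoprodI.of m * w.prod) ≤ wfn ⟨i, m⟩ + (w.toList.map wfn).sum := by
  obtain ⟨L, hne, hch⟩ := w
  cases L with
  | nil =>
    have hprod : (⟨[], hne, hch⟩ : CoprodI.Word Fam).prod = 1 := rfl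
    rw [hprod, mul_one]
    have : CoprodI.of m = (⟨[⟨i, m⟩], by simpa using hm, List.isChain_singleton _⟩ :
        CoprodI.Word Fam).prod := by
      rw [word_prod_mk]; simp
    rw [this, Wt_of_word]
    simp
  | cons hd t =>
    obtain ⟨j, m'⟩ := hd
    have hprod : (⟨⟨j,m'⟩ :: t, hne, hch⟩ : CoprodI.Word Fam).prod
        = CoprodI.of m' * (t.map fun l => CoprodI.of l.snd).prod := by
      rw [word_prod_mk]; simp
    by_cases hij : i = j
    · subst hij
      rw [hprod, ← mul_assoc, ← MonoidHom.map_mul]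
      have hne_t : ∀ l ∈ t, Sigma.snd l ≠ 1 := fun l hl => hne l (List.mem_cons_of_mem _ hl)
      have hch_t : t.Chain' fun l l' => Sigma.fst l ≠ Sigma.fst l' := hch.tail
      by_cases hmm : m * m' = 1
      · rw [hmm, MonoidHom.map_one, one_mul]
        have : (t.map fun l => CoprodI.of l.snd).prod
            = (⟨t, hne_t, hch_t⟩ : CoprodI.Word Fam).prod := rfl
        rw [this, Wt_of_word]
        simp only [List.map_cons, List.sum_cons]
        omega
      · have hch' : (⟨i, m * m'⟩ :: t).IsChain fun l l' => Sigma.fst l ≠ Sigma.fst l' := by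
          rw [List.isChain_cons] at hch ⊢
          exact ⟨hch.1, hch.2⟩
        have hne' : ∀ l ∈ (⟨i, m * m'⟩ :: t), Sigma.snd l ≠ 1 := by
          intro l hl
          rcases List.mem_cons.mp hl with h | h
          · subst h; exact hmm
          · exact hne_t l h
        have : CoprodI.of (m * m') * (t.map fun l => CoprodI.of l.snd).prod
            = (⟨⟨i, m*m'⟩ :: t, hne', hch'⟩ : CoprodI.Word Fam).prod := by
          rw [word_prod_mk]; simp
        rw [this, Wt_of_word]
        simp only [List.map_cons, List.sum_cons]
        have := key_wfn i m m' hm (hne ⟨i, m'⟩ (List.mem_cons_self)) hmm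
        omega
    · have hch' : (⟨i, m⟩ :: ⟨j, m'⟩ :: t).IsChain fun l l' => Sigma.fst l ≠ Sigma.fst l' :=
        List.IsChain.cons_cons hij hch
      have hne' : ∀ l ∈ (⟨i, m⟩ :: ⟨j, m'⟩ :: t), Sigma.snd l ≠ 1 := by
        intro l hl
        rcases List.mem_cons.mp hl with h | h
        · subst h; exact hm
        · exact hne l h
      have : CoprodI.of m * (⟨⟨j,m'⟩ :: t, hne, hch⟩ : CoprodI.Word Fam).prod
          = (⟨⟨i, m⟩ :: ⟨j, m'⟩ :: t, hne', hch'⟩ : CoprodI.Word Fam).prod := by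
        rw [word_prod_mk, word_prod_mk]; simp
      rw [this, Wt_of_word]
      simp

lemma Wt_of_mul_le (i : Bool) (m : Fam i) (g : Γ) :
    Wt (CoprodI.of m * g) ≤ wfn ⟨i, m⟩ + Wt g := by
  by_cases hm : m = 1
  · subst hm
    rw [MonoidHom.map_one, one_mul]
    omega
  · have := Wt_of_mul_word i m hm (CoprodI.Word.equiv g)
    rw [prod_equiv] at this
    exact this

lemma Wt_listmul (L : List S) (g : Γ) :
    Wt ((L.map fun l => CoprodI.of l.snd).prod * g) ≤ (L.map wfn).sum + Wt g := by
  induction L with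
  | nil => simp
  | cons hd t ih =>
    obtain ⟨hi, hm⟩ := hd
    simp only [List.map_cons, List.prod_cons, List.sum_cons, mul_assoc]
    calc Wt (CoprodI.of (⟨hi, hm⟩ : S).snd * ((t.map fun l => CoprodI.of l.snd).prod * g))
        ≤ wfn ⟨hi, hm⟩ + Wt ((t.map fun l => CoprodI.of l.snd).prod * g) :=
          Wt_of_mul_le _ _ _
      _ ≤ wfn ⟨hi, hm⟩ + ((t.map wfn).sum + Wt g) := by
          have := ih
          omega
      _ = wfn ⟨hi, hm⟩ + (t.map wfn).sum + Wt g := by ring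

lemma Wt_mul_le (a b : Γ) : Wt (a * b) ≤ Wt a + Wt b := by
  have ha := prod_equiv a
  have := Wt_listmul ((CoprodI.Word.equiv a).toList) b
  rw [← Wt] at this
  rw [CoprodI.Word.prod] at ha
  rw [ha] at this
  exact this

lemma Wt_pow_le (u : Γ) (N : ℕ) : Wt (u ^ N) ≤ N * Wt u := by
  induction N with
  | zero => simp [Wt_one]
  | succ n ih =>
    rw [pow_succ]
    calc Wt (u ^ n * u) ≤ Wt (u ^ n) + Wt u := Wt_mul_le _ _
      _ ≤ n * Wt u + Wt u := by omega
      _ = (n+1) * Wt u := by ring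


lemma xgxg : xg * xg = 1 := by decide
lemma ygygyg : yg * yg * yg = 1 := by decide

lemma XX : X * X = 1 := by
  rw [X, ← MonoidHom.map_mul, xgxg, MonoidHom.map_one]

lemma YYY : Y * Y * Y = 1 := by
  rw [Y, ← MonoidHom.map_mul, ← MonoidHom.map_mul, ygygyg, MonoidHom.map_one]

lemma YYY' : Y * (Y * Y) = 1 := by rw [← mul_assoc, YYY]

lemma Xc (c : Γ) : X * (X * c) = c := by rw [← mul_assoc, XX, one_mul]
lemma Yc (c : Γ) : Y * (Y * (Y * c)) = c := by
  rw [← mul_assoc, ← mul_assoc, YYY, one_mul]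
-- ===== explicit words =====
lemma ygyg : yg * yg = yg2 := by decide

lemma ofyg2 : CoprodI.of yg2 = Y * Y := by
  rw [Y, ← MonoidHom.map_mul, ygyg]

def blockL' : ℕ → List S
  | 0 => [sx, sy2]
  | (k+1) => sx :: sy :: blockL' k

def RR : S → S → Prop := fun l l' => l.fst ≠ l'.fst

lemma blockL'_head (k : ℕ) : (blockL' k).head? = some sx := by
  cases k <;> rfl

lemma RRxy : RR sx sy := by simp [RR, sx, sy]
lemma RRxy2 : RR sx sy2 := by simp [RR, sx, sy2]
lemma RRyx : RR sy sx := by simp [RR, sx, sy]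
lemma RRy2x : RR sy2 sx := by simp [RR, sx, sy2]

lemma chain_blockL'_append (k : ℕ) (rest : List S) (hrest : rest.IsChain RR)
    (hhead : ∀ z ∈ rest.head?, z = sx) :
    (blockL' k ++ rest).IsChain RR := by
  induction k with
  | zero =>
    simp only [blockL', List.cons_append, List.singleton_append]
    rw [List.isChain_cons_cons]
    refine ⟨RRxy2, ?_⟩
    rw [List.isChain_cons]
    refine ⟨?_, hrest⟩
    intro z hz
    rw [hhead z hz]
    exact RRy2x
  | succ n ih =>
    simp only [blockL', List.cons_append]
    rw [List.isChain_cons_cons]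
    refine ⟨RRxy, ?_⟩
    rw [List.isChain_cons]
    refine ⟨?_, ih⟩
    intro z hz
    rw [List.head?_append, blockL'_head] at hz
    simp only [Option.some_or] at hz
    cases hz
    exact RRyx

def blockL (c : ℕ) : List S := blockL' (c - 2)
def VL (params : List ℕ) : List S := (params.map blockL).flatten

lemma VL_nil : VL [] = [] := rfl
lemma VL_cons (c : ℕ) (ps : List ℕ) : VL (c :: ps) = blockL c ++ VL ps := by
  rw [VL, List.map_cons, List.flatten_cons]; rfl

lemma VL_head (params : List ℕ) : ∀ z ∈ (VL params).head?, z = sx := by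
  induction params with
  | nil => intro z hz; simp [VL_nil] at hz
  | cons c ps ih =>
    intro z hz
    rw [VL_cons, List.head?_append, blockL, blockL'_head] at hz
    simp only [Option.some_or] at hz
    cases hz
    rfl

lemma chain_VL (params : List ℕ) : (VL params).IsChain RR := by
  induction params with
  | nil => exact List.isChain_nil
  | cons c ps ih =>
    rw [VL_cons]
    exact chain_blockL'_append _ _ ih (VL_head ps)

lemma mem_blockL' (k : ℕ) : ∀ l ∈ blockL' k, l = sx ∨ l = sy ∨ l = sy2 := by
  induction k with
  | zero =>
    intro l hl
    simp only [blockL', List.mem_cons, List.not_mem_nil, or_false] at hl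
    tauto
  | succ n ih =>
    intro l hl
    simp only [blockL', List.mem_cons] at hl
    rcases hl with h | h | h
    · tauto
    · tauto
    · exact ih l h

lemma ne_one_VL (params : List ℕ) : ∀ l ∈ VL params, Sigma.snd l ≠ 1 := by
  intro l hl
  rw [VL, List.mem_flatten] at hl
  obtain ⟨Lb, hLb, hlLb⟩ := hl
  rw [List.mem_map] at hLb
  obtain ⟨c, _, rfl⟩ := hLb
  rcases mem_blockL' _ l hlLb with h | h | h <;> subst h <;> decide

-- products
def blockΓ (c : ℕ) : Γ := (X * Y) ^ (c - 1) * Y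
def bigProd (params : List ℕ) : Γ := (params.map blockΓ).prod

lemma blockL'_prod (k : ℕ) :
    ((blockL' k).map fun l => CoprodI.of l.snd).prod = (X * Y) ^ (k + 1) * Y := by
  induction k with
  | zero =>
    simp only [blockL', List.map_cons, List.map_nil, List.prod_cons, List.prod_nil, mul_one]
    show X * CoprodI.of yg2 = _
    rw [ofyg2, pow_one, mul_assoc]
  | succ n ih =>
    simp only [blockL', List.map_cons, List.prod_cons]
    rw [ih]
    show X * (Y * ((X * Y) ^ (n + 1) * Y)) = (X * Y) ^ (n + 1 + 1) * Y
    rw [pow_succ' (X*Y) (n+1)]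
    simp only [mul_assoc]

lemma blockL_prod (c : ℕ) (hc : 2 ≤ c) :
    ((blockL c).map fun l => CoprodI.of l.snd).prod = blockΓ c := by
  rw [blockL, blockL'_prod, blockΓ]
  congr 2
  omega

lemma VL_prod (params : List ℕ) (h2 : ∀ c ∈ params, 2 ≤ c) :
    ((VL params).map fun l => CoprodI.of l.snd).prod = bigProd params := by
  induction params with
  | nil => rfl
  | cons c ps ih =>
    rw [VL_cons, List.map_append, List.prod_append]
    rw [ih fun d hd => h2 d (List.mem_cons_of_mem _ hd)]
    rw [blockL_prod c (h2 c (List.mem_cons_self))]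
    rw [bigProd, bigProd, List.map_cons, List.prod_cons]

-- weights
lemma blockL'_wt (k : ℕ) : ((blockL' k).map wfn).sum = k + 2 := by
  induction k with
  | zero => rfl
  | succ n ih =>
    simp only [blockL', List.map_cons, List.sum_cons] at ih ⊢
    rw [ih]
    show wfn sx + (wfn sy + (n + 2)) = n + 1 + 2
    have h1 : wfn sx = 0 := rfl
    have h2 : wfn sy = 1 := rfl
    omega

lemma VL_wt (params : List ℕ) (h2 : ∀ c ∈ params, 2 ≤ c) :
    ((VL params).map wfn).sum = params.sum := by
  induction params with
  | nil => rfl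
  | cons c ps ih =>
    rw [VL_cons, List.map_append, List.sum_append]
    rw [ih fun d hd => h2 d (List.mem_cons_of_mem _ hd), List.sum_cons]
    rw [blockL, blockL'_wt]
    have := h2 c (List.mem_cons_self)
    omega

lemma Wt_bigProd (params : List ℕ) (h2 : ∀ c ∈ params, 2 ≤ c) :
    Wt (bigProd params) = params.sum := by
  have hword : (⟨VL params, ne_one_VL params, chain_VL params⟩ : CoprodI.Word Fam).prod
      = bigProd params := by
    refine (word_prod_mk _ _ _).trans ?_
    rw [VL_prod params h2]
  rw [← hword, Wt_of_word, VL_wt params h2]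

lemma bigProd_append (p q : List ℕ) : bigProd (p ++ q) = bigProd p * bigProd q := by
  rw [bigProd, List.map_append, List.prod_append]; rfl

lemma bigProd_pow (params : List ℕ) (N : ℕ) :
    (bigProd params) ^ N = bigProd (List.replicate N params).flatten := by
  induction N with
  | zero => simp [bigProd]
  | succ n ih =>
    rw [pow_succ', List.replicate_succ, List.flatten_cons, bigProd_append, ih]

lemma Wt_bigProd_pow (params : List ℕ) (h2 : ∀ c ∈ params, 2 ≤ c) (N : ℕ) :
    Wt ((bigProd params) ^ N) = N * params.sum := by
  rw [bigProd_pow]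
  rw [Wt_bigProd]
  · induction N with
    | zero => simp
    | succ n ih =>
      rw [List.replicate_succ, List.flatten_cons, List.sum_append, ih]
      ring
  · intro c hc
    rw [List.mem_flatten] at hc
    obtain ⟨L, hL, hcL⟩ := hc
    rw [List.mem_replicate] at hL
    exact h2 c (hL.2 ▸ hcL)

-- ===== the homomorphism φ : B₃ →* Γ =====

def fφ : Fin 2 → Γ := ![Y * X, X * Y]

lemma relφ : ∀ r ∈ braidRel, FreeGroup.lift fφ r = 1 := by
  intro r hr
  rw [braidRel, Set.mem_singleton_iff] at hr
  subst hr
  simp only [map_mul, map_inv, FreeGroup.lift_apply_of, fφ]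
  simp only [Matrix.cons_val_zero, Matrix.cons_val_one, Matrix.head_cons]
  rw [mul_inv_eq_one]
  simp only [mul_assoc, Xc, Yc, YYY', mul_one]

noncomputable def φ : B₃ →* Γ := PresentedGroup.toGroup relφ

lemma φσ₁ : φ σ₁ = Y * X := by
  rw [φ, σ₁, PresentedGroup.toGroup.of]; rfl
lemma φσ₂ : φ σ₂ = X * Y := by
  rw [φ, σ₂, PresentedGroup.toGroup.of]; rfl
lemma φΔ : φ Δ = X := by
  rw [Δ, map_mul, map_mul, φσ₁, φσ₂]
  simp only [mul_assoc, Xc]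
  exact Yc X

-- ===== exponent sum e : B₃ →* Multiplicative ℤ =====
def fe : Fin 2 → Multiplicative ℤ := ![Multiplicative.ofAdd 1, Multiplicative.ofAdd 1]

lemma rele : ∀ r ∈ braidRel, FreeGroup.lift fe r = 1 := by
  intro r hr
  rw [braidRel, Set.mem_singleton_iff] at hr
  subst hr
  simp only [map_mul, map_inv, FreeGroup.lift_apply_of, fe]
  simp only [Matrix.cons_val_zero, Matrix.cons_val_one, Matrix.head_cons]
  group

noncomputable def e : B₃ →* Multiplicative ℤ := PresentedGroup.toGroup rele

lemma eσ₁ : e σ₁ = Multiplicative.ofAdd 1 := by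
  rw [e, σ₁, PresentedGroup.toGroup.of]; rfl
lemma eσ₂ : e σ₂ = Multiplicative.ofAdd 1 := by
  rw [e, σ₂, PresentedGroup.toGroup.of]; rfl
lemma eΔ : e Δ = Multiplicative.ofAdd 3 := by
  rw [Δ, map_mul, map_mul, eσ₁, eσ₂]
  rfl

-- ===== bridge lemmas =====
def blockφ (c : ℕ) : Γ := Y * (X * Y) ^ (c - 1)

lemma blockφ_eq (c : ℕ) : blockφ c = Y * blockΓ c * Y⁻¹ := by
  rw [blockφ, blockΓ]
  simp only [mul_assoc, mul_inv_cancel, mul_one]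

lemma YXpow (k : ℕ) : (Y * X) ^ (k + 1) = Y * (X * Y) ^ k * X := by
  induction k with
  | zero => simp
  | succ n ih =>
    rw [pow_succ, ih, pow_succ]
    simp only [mul_assoc]

lemma Xabsorb (k : ℕ) : X * (X * Y) ^ (k + 1) = Y * (X * Y) ^ k := by
  rw [pow_succ']
  rw [mul_assoc X Y ((X*Y)^k), Xc]

lemma φ_pair (p1 p2 : ℕ) (h1 : 1 ≤ p1) (h2 : 1 ≤ p2) :
    φ (σ₁ ^ p1 * σ₂ ^ p2) = blockφ p1 * blockφ p2 := by
  rw [map_mul, map_pow, map_pow, φσ₁, φσ₂]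
  obtain ⟨k1, rfl⟩ : ∃ k, p1 = k + 1 := ⟨p1 - 1, by omega⟩
  obtain ⟨k2, rfl⟩ : ∃ k, p2 = k + 1 := ⟨p2 - 1, by omega⟩
  rw [YXpow, blockφ, blockφ]
  simp only [Nat.add_sub_cancel]
  rw [mul_assoc (Y * (X*Y)^k1) X ((X*Y)^(k2+1)), Xabsorb]

lemma bigProd_cons (c : ℕ) (L : List ℕ) : bigProd (c :: L) = blockΓ c * bigProd L := by
  rw [bigProd, bigProd, List.map_cons, List.prod_cons]

lemma φ_K (K : List (ℕ × ℕ)) (h : ∀ p ∈ K, 1 ≤ p.1 ∧ 1 ≤ p.2) :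
    φ ((K.map fun p => σ₁ ^ p.1 * σ₂ ^ p.2).prod)
      = Y * bigProd ((K.map fun p => [p.1, p.2]).flatten) * Y⁻¹ := by
  induction K with
  | nil => simp [bigProd]
  | cons p K' ih =>
    rw [List.map_cons, List.prod_cons, map_mul,
      φ_pair p.1 p.2 (h p (List.mem_cons_self)).1 (h p (List.mem_cons_self)).2,
      ih fun q hq => h q (List.mem_cons_of_mem _ hq),
      List.map_cons, List.flatten_cons]
    rw [show ([p.1, p.2] : List ℕ) ++ (K'.map fun p => [p.1, p.2]).flatten
        = p.1 :: p.2 :: (K'.map fun p => [p.1, p.2]).flatten from rfl]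
    rw [bigProd_cons, bigProd_cons, blockφ_eq, blockφ_eq]
    simp only [mul_assoc, inv_mul_cancel_left]

lemma eK (K : List (ℕ × ℕ)) :
    Multiplicative.toAdd (e ((K.map fun p => σ₁ ^ p.1 * σ₂ ^ p.2).prod))
      = ((((K.map fun p => [p.1, p.2]).flatten).sum : ℕ) : ℤ) := by
  induction K with
  | nil => simp
  | cons p K' ih =>
    rw [List.map_cons, List.prod_cons, map_mul, List.map_cons, List.flatten_cons]
    rw [toAdd_mul, ih]
    rw [map_mul, map_pow, map_pow, eσ₁, eσ₂, toAdd_mul, toAdd_pow, toAdd_pow]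
    simp only [toAdd_ofAdd, smul_eq_mul, mul_one, List.sum_append, List.sum_cons,
      List.sum_nil, add_zero]
    push_cast
    ring

lemma e_posword (l : List B₃) (hl : ∀ z ∈ l, z = σ₁ ∨ z = σ₂) :
    Multiplicative.toAdd (e l.prod) = (l.length : ℤ) := by
  induction l with
  | nil => simp
  | cons z t ih =>
    rw [List.prod_cons, map_mul, toAdd_mul,
      ih fun w hw => hl w (List.mem_cons_of_mem _ hw)]
    rcases hl z (List.mem_cons_self) with h | h <;> subst h <;>
      simp [eσ₁, eσ₂] <;> ring

lemma Wt_single {i : Bool} (m : Fam i) : Wt (CoprodI.of m) ≤ wfn ⟨i, m⟩ := by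
  have := Wt_of_mul_le i m 1
  simpa [Wt_one] using this

lemma Wt_X : Wt X ≤ 0 := by simpa [wfn, sx, X] using Wt_single xg
lemma Wt_Y : Wt Y ≤ 1 := by
  have := Wt_single yg
  simpa [wfn, Y] using this

lemma Wt_posword (l : List B₃) (hl : ∀ z ∈ l, z = σ₁ ∨ z = σ₂) :
    Wt (φ l.prod) ≤ l.length := by
  induction l with
  | nil => simp [Wt_one]
  | cons z t ih =>
    rw [List.prod_cons, map_mul]
    have h1 : Wt (φ z) ≤ 1 := by
      rcases hl z (List.mem_cons_self) with h | h <;> subst h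
      · rw [φσ₁]
        calc Wt (Y * X) ≤ Wt Y + Wt X := Wt_mul_le _ _
          _ ≤ 1 := by have := Wt_X; have := Wt_Y; omega
      · rw [φσ₂]
        calc Wt (X * Y) ≤ Wt X + Wt Y := Wt_mul_le _ _
          _ ≤ 1 := by have := Wt_X; have := Wt_Y; omega
    calc Wt (φ z * φ t.prod) ≤ Wt (φ z) + Wt (φ t.prod) := Wt_mul_le _ _
      _ ≤ 1 + t.length := by
          have := ih fun w hw => hl w (List.mem_cons_of_mem _ hw)
          omega
      _ = (z :: t).length := by simp [add_comm]

lemma X2 : X ^ (2:ℤ) = 1 := by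
  rw [show (2:ℤ) = ((2:ℕ):ℤ) from rfl, zpow_natCast, pow_two, XX]

lemma Xzpow (m : ℤ) : X ^ m = 1 ∨ X ^ m = X := by
  rcases Int.even_or_odd m with ⟨t, rfl⟩ | ⟨t, rfl⟩
  · left
    rw [show t + t = 2 * t by ring, zpow_mul, X2, one_zpow]
  · right
    rw [zpow_add, zpow_mul, X2, one_zpow, one_mul, zpow_one]

lemma conj_pow' (d u : Γ) (N : ℕ) : (d⁻¹ * u * d) ^ N = d⁻¹ * u ^ N * d := by
  induction N with
  | zero => simp
  | succ n ih =>
    rw [pow_succ, ih, pow_succ]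
    simp only [mul_assoc, mul_inv_cancel_left]

lemma Xzpow_even (m : ℤ) (hm : Even m) : X ^ m = 1 := by
  obtain ⟨t, rfl⟩ := hm
  rw [show t + t = 2 * t by ring, zpow_mul, X2, one_zpow]

lemma Xzpow_odd (m : ℤ) (hm : Odd m) : X ^ m = X := by
  obtain ⟨t, rfl⟩ := hm
  rw [zpow_add, zpow_mul, X2, one_zpow, one_mul, zpow_one]

lemma YXX (k : ℕ) : (Y * X) ^ (k + 1) * X = blockφ (k + 1) := by
  rw [YXpow, blockφ]
  simp only [Nat.add_sub_cancel, mul_assoc, XX, mul_one]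

lemma main_aux (params : List ℕ) (h2 : ∀ c ∈ params, 2 ≤ c)
    (β : B₃) (m m' : ℤ) (α : B₃) (l : List B₃) (hl : ∀ z ∈ l, z = σ₁ ∨ z = σ₂)
    (hφβ : φ β = Y * bigProd params * Y⁻¹)
    (heβ : Multiplicative.toAdd (e β) = (params.sum : ℤ) + 3 * m)
    (hβeq : β = α⁻¹ * (l.prod * Δ ^ m') * α) : m' ≤ m := by
  -- exponent count
  have he2 : Multiplicative.toAdd (e β) = (l.length : ℤ) + 3 * m' := by
    rw [hβeq]
    simp only [map_mul, map_inv, map_zpow, toAdd_mul, toAdd_inv, toAdd_zpow, eΔ,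
      e_posword l hl, toAdd_ofAdd, smul_eq_mul]
    ring
  -- conjugation equation in Γ
  set u : Γ := φ l.prod * X ^ m' with hu_def
  set d : Γ := φ α * Y with hd_def
  have hconj : bigProd params = d⁻¹ * u * d := by
    have h1 : φ β = (φ α)⁻¹ * u * (φ α) := by
      rw [hβeq]
      simp only [map_mul, map_inv, map_zpow, φΔ, hu_def]
    have h2' : Y * bigProd params * Y⁻¹ = (φ α)⁻¹ * u * (φ α) := by
      rw [← hφβ, h1]
    have h3 : bigProd params = Y⁻¹ * ((φ α)⁻¹ * u * (φ α)) * Y := by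
      rw [← h2']
      group
    rw [h3, hd_def]
    group
  -- weight bound on u
  have hWtu : Wt u ≤ l.length := by
    rw [hu_def]
    calc Wt (φ l.prod * X ^ m') ≤ Wt (φ l.prod) + Wt (X ^ m') := Wt_mul_le _ _
      _ ≤ l.length + 0 := by
          have h4 := Wt_posword l hl
          have h5 : Wt (X ^ m') ≤ 0 := by
            rcases Xzpow m' with h | h <;> rw [h]
            · simp [Wt_one]
            · exact Wt_X
          omega
      _ = l.length := by omega
  -- the key inequality for all N
  have key : ∀ N : ℕ, N * params.sum ≤ Wt d⁻¹ + Wt d + N * l.length := by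
    intro N
    have h6 : Wt ((bigProd params) ^ N) = N * params.sum := Wt_bigProd_pow params h2 N
    rw [hconj, conj_pow'] at h6
    calc N * params.sum = Wt (d⁻¹ * u ^ N * d) := h6.symm
      _ ≤ Wt (d⁻¹ * u ^ N) + Wt d := Wt_mul_le _ _
      _ ≤ (Wt d⁻¹ + Wt (u ^ N)) + Wt d := by
          have := Wt_mul_le d⁻¹ (u ^ N)
          omega
      _ ≤ Wt d⁻¹ + Wt d + N * l.length := by
          have h7 : Wt (u ^ N) ≤ N * Wt u := Wt_pow_le u N
          have h8 : N * Wt u ≤ N * l.length := Nat.mul_le_mul_left N hWtu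
          omega
  -- finish
  by_contra hcon
  push_neg at hcon
  have hge : l.length + 3 ≤ params.sum := by
    have := he2 ▸ heβ
    omega
  set C := Wt d⁻¹ + Wt d with hC
  have hkey := key (C + 1)
  have h9 : (C + 1) * (l.length + 3) ≤ (C + 1) * params.sum :=
    Nat.mul_le_mul_left _ hge
  have h10 : (C + 1) * (l.length + 3) = (C + 1) * l.length + 3 * (C + 1) := by ring
  omega

/-- Conjugation does not increase the Δ-exponent of a 3-braid in the alternating normal
form of Equation (1). -/
theorem conjugation_does_not_increase_exponent (m : ℤ) (β : B₃)
    (hβ :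
      (Even m ∧ ∃ (s : ℕ) (a b : Fin s → ℕ), 1 ≤ s ∧ (∀ i, 2 ≤ a i) ∧ (∀ i, 2 ≤ b i) ∧
        β = (List.ofFn fun i => σ₁ ^ a i * σ₂ ^ b i).prod * Δ ^ m) ∨
      (Odd m ∧ ∃ (s : ℕ) (a b : Fin s → ℕ) (a' : ℕ), (∀ i, 2 ≤ a i) ∧ (∀ i, 2 ≤ b i) ∧
        2 ≤ a' ∧
        β = (List.ofFn fun i => σ₁ ^ a i * σ₂ ^ b i).prod * σ₁ ^ a' * Δ ^ m))
    (α : B₃) (m' : ℤ)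
    (h : α * β * α⁻¹ * Δ ^ (-m') ∈ Submonoid.closure ({σ₁, σ₂} : Set B₃)) :
    m' ≤ m := by
  -- extract the positive word
  obtain ⟨l, hlmem, hlprod⟩ := Submonoid.exists_list_of_mem_closure h
  have hl : ∀ z ∈ l, z = σ₁ ∨ z = σ₂ := by
    intro z hz
    have := hlmem z hz
    simpa using this
  have hβeq : β = α⁻¹ * (l.prod * Δ ^ m') * α := by
    rw [hlprod]
    group
  -- case analysis on form
  rcases hβ with ⟨hEven, s, a, b, hs, ha2, hb2, hform⟩ | ⟨hOdd, s, a, b, a', ha2, hb2, ha'2, hform⟩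
  · -- even case
    set K : List (ℕ × ℕ) := List.ofFn fun i => (a i, b i) with hK
    have hKmem : ∀ p ∈ K, 2 ≤ p.1 ∧ 2 ≤ p.2 := by
      intro p hp
      rw [hK, List.mem_ofFn] at hp
      obtain ⟨i, rfl⟩ := hp
      exact ⟨ha2 i, hb2 i⟩
    set params : List ℕ := (K.map fun p => [p.1, p.2]).flatten with hparams
    have h2 : ∀ c ∈ params, 2 ≤ c := by
      intro c hc
      rw [hparams, List.mem_flatten] at hc
      obtain ⟨L, hL, hcL⟩ := hc
      rw [List.mem_map] at hL
      obtain ⟨p, hp, rfl⟩ := hL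
      simp only [List.mem_cons, List.not_mem_nil, or_false] at hcL
      rcases hcL with rfl | rfl
      · exact (hKmem p hp).1
      · exact (hKmem p hp).2
    have hWform : (List.ofFn fun i => σ₁ ^ a i * σ₂ ^ b i)
        = K.map fun p => σ₁ ^ p.1 * σ₂ ^ p.2 := by
      rw [hK, List.map_ofFn]
      rfl
    refine main_aux params h2 β m m' α l hl ?_ ?_ hβeq
    · rw [hform, map_mul, map_zpow, φΔ, Xzpow_even m hEven, mul_one, hWform,
        φ_K K fun p hp => ⟨le_trans one_le_two (hKmem p hp).1, le_trans one_le_two (hKmem p hp).2⟩]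
    · rw [hform, map_mul, map_zpow, toAdd_mul, toAdd_zpow, eΔ, hWform, eK]
      simp only [toAdd_ofAdd, smul_eq_mul]
      ring
  · -- odd case
    set K : List (ℕ × ℕ) := List.ofFn fun i => (a i, b i) with hK
    have hKmem : ∀ p ∈ K, 2 ≤ p.1 ∧ 2 ≤ p.2 := by
      intro p hp
      rw [hK, List.mem_ofFn] at hp
      obtain ⟨i, rfl⟩ := hp
      exact ⟨ha2 i, hb2 i⟩
    set params : List ℕ := ((K.map fun p => [p.1, p.2]).flatten) ++ [a'] with hparams
    have h2 : ∀ c ∈ params, 2 ≤ c := by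
      intro c hc
      rw [hparams, List.mem_append] at hc
      rcases hc with hc | hc
      · rw [List.mem_flatten] at hc
        obtain ⟨L, hL, hcL⟩ := hc
        rw [List.mem_map] at hL
        obtain ⟨p, hp, rfl⟩ := hL
        simp only [List.mem_cons, List.not_mem_nil, or_false] at hcL
        rcases hcL with rfl | rfl
        · exact (hKmem p hp).1
        · exact (hKmem p hp).2
      · simp only [List.mem_singleton] at hc
        omega
    have hWform : (List.ofFn fun i => σ₁ ^ a i * σ₂ ^ b i)
        = K.map fun p => σ₁ ^ p.1 * σ₂ ^ p.2 := by
      rw [hK, List.map_ofFn]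
      rfl
    obtain ⟨k', hk'⟩ : ∃ k, a' = k + 1 := ⟨a' - 1, by omega⟩
    subst hk'
    refine main_aux params h2 β m m' α l hl ?_ ?_ hβeq
    · rw [hform, map_mul, map_mul, map_zpow, φΔ, Xzpow_odd m hOdd, map_pow, φσ₁, hWform,
        φ_K K fun p hp => ⟨le_trans one_le_two (hKmem p hp).1, le_trans one_le_two (hKmem p hp).2⟩]
      rw [mul_assoc, YXX, blockφ_eq, hparams, bigProd_append]
      rw [show bigProd [k' + 1] = blockΓ (k' + 1) * 1 from bigProd_cons _ _]
      simp only [mul_one, mul_assoc, inv_mul_cancel_left]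
    · rw [hform, hWform]
      simp only [map_mul, map_zpow, map_pow, toAdd_mul, toAdd_zpow, toAdd_pow, eΔ, eσ₁,
        toAdd_ofAdd, smul_eq_mul]
      rw [eK]
      simp only [hparams, List.sum_append, List.sum_cons, List.sum_nil, add_zero]
      push_cast
      ring
end

section
/- Block-count bound for quasipositive 3-braids with Δ-exponent −2: let s ≥ 1 and let a₁,…,a_s, b₁,…,b_s be integers with every a_i ≥ 2 and every b_i ≥ 2, and set β = (∏_{i=1}^{s} σ₁^{a_i}σ₂^{b_i})·Δ⁻². If β is quasipositive, then s ≥ 2, i.e., the number r = 2s of syllable blocks of the positive part satisfies r ≥ 4. (This is the claim 'according to Orevkov's criterion of quasipositivity, r ≥ 4' in the paper's proof of Proposition 4.1.) -/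
namespace Orevkov

/-- Points of the lifted projective line: (k, none) is the "∞" point of block k,
(k, some t) is slope t in block k.  Ordered lexicographically, with none below every some. -/
abbrev P := ℤ × Option ℚ

def ole : Option ℚ → Option ℚ → Prop
  | none, _ => True
  | some _, none => False
  | some t, some u => t ≤ u

lemma ole_refl : ∀ x, ole x x := by rintro (_ | t) <;> simp [ole]

lemma ole_total : ∀ x y, ole x y ∨ ole y x := by
  rintro (_ | x) (_ | y) <;> simp [ole] <;> exact le_total x y

lemma ole_antisymm : ∀ {x y}, ole x y → ole y x → x = y := by
  rintro (_ | x) (_ | y) h1 h2 <;> simp_all [ole]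
  exact le_antisymm h1 h2

def xle (p q : P) : Prop := p.1 < q.1 ∨ (p.1 = q.1 ∧ ole p.2 q.2)

lemma xle_refl (p : P) : xle p p := Or.inr ⟨rfl, ole_refl _⟩

lemma xle_total (p q : P) : xle p q ∨ xle q p := by
  rcases lt_trichotomy p.1 q.1 with h | h | h
  · exact Or.inl (Or.inl h)
  · rcases ole_total p.2 q.2 with h2 | h2
    · exact Or.inl (Or.inr ⟨h, h2⟩)
    · exact Or.inr (Or.inr ⟨h.symm, h2⟩)
  · exact Or.inr (Or.inl h)

lemma xle_antisymm {p q : P} (h1 : xle p q) (h2 : xle q p) : p = q := by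
  rcases h1 with h1 | ⟨h1, h1'⟩ <;> rcases h2 with h2 | ⟨h2, h2'⟩ <;>
    first
    | omega
    | · exfalso; omega
    | · exact Prod.ext h1 (ole_antisymm h1' h2')

lemma ole_trans : ∀ {x y z : Option ℚ}, ole x y → ole y z → ole x z := by
  rintro (_ | x) (_ | y) (_ | z) h1 h2 <;> simp_all [ole]
  exact le_trans h1 h2

lemma xle_trans {p q r : P} (h1 : xle p q) (h2 : xle q r) : xle p r := by
  rcases h1 with h | ⟨h, h'⟩ <;> rcases h2 with g | ⟨g, g'⟩
  · exact Or.inl (h.trans g)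
  · exact Or.inl (g ▸ h)
  · exact Or.inl (h ▸ g)
  · exact Or.inr ⟨h.trans g, ole_trans h' g'⟩

def g1 : P → P
  | (k, none) => (k, none)
  | (k, some t) => (k, some (t + 1))

def g1i : P → P
  | (k, none) => (k, none)
  | (k, some t) => (k, some (t - 1))

def s1 : Equiv.Perm P :=
  ⟨g1, g1i, by rintro ⟨k, _ | t⟩ <;> simp [g1, g1i],
    by rintro ⟨k, _ | t⟩ <;> simp [g1, g1i]⟩

def g2 : P → P
  | (k, none) => (k, some (-1))
  | (k, some t) =>
    if t < 1 then (k, some (t / (1 - t)))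
    else if t = 1 then (k + 1, none)
    else (k + 1, some (t / (1 - t)))

def g2i : P → P
  | (k, none) => (k - 1, some 1)
  | (k, some t) =>
    if t = -1 then (k, none)
    else if -1 < t then (k, some (t / (1 + t)))
    else (k - 1, some (t / (1 + t)))

def s2 : Equiv.Perm P :=
  ⟨g2, g2i, by
    rintro ⟨k, _ | t⟩
    · simp [g2, g2i]
    · simp only [g2]
      split_ifs with h1 h2
      · have hne : (1 : ℚ) - t ≠ 0 := by intro h; rw [sub_eq_zero] at h; exact absurd h.symm (ne_of_lt h1)
        have h1' : (0:ℚ) < 1 - t := by linarith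
        have hA : t / (1 - t) ≠ -1 := by
          intro h
          have := (div_eq_iff hne).mp h
          linarith
        have hB : (-1 : ℚ) < t / (1 - t) := by
          rw [lt_div_iff₀ h1']; linarith
        simp only [g2i, if_neg hA, if_pos hB]
        have : t / (1 - t) / (1 + t / (1 - t)) = t := by field_simp; ring
        rw [this]
      · subst h2; norm_num [g2i]
      · have hne : (1 : ℚ) - t ≠ 0 := by intro h; rw [sub_eq_zero] at h; exact absurd h.symm h2
        have ht1 : (1:ℚ) < t := lt_of_le_of_ne (not_lt.mp h1) (Ne.symm h2)
        have h1' : (1:ℚ) - t < 0 := by linarith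
        have hA : t / (1 - t) ≠ -1 := by
          intro h
          have := (div_eq_iff hne).mp h
          linarith
        have hB : ¬ (-1 : ℚ) < t / (1 - t) := by
          rw [not_lt, div_le_iff_of_neg h1']; linarith
        simp only [g2i, if_neg hA, if_neg hB]
        have : t / (1 - t) / (1 + t / (1 - t)) = t := by
          field_simp
          ring
        rw [this]
        simp,
   by
    rintro ⟨k, _ | t⟩
    · norm_num [g2i, g2]
    · simp only [g2i]
      split_ifs with h1 h2
      · subst h1; norm_num [g2]
      · have hne : (1 : ℚ) + t ≠ 0 := by intro h; apply h2.ne'; linarith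
        have h1' : (0:ℚ) < 1 + t := by linarith
        have hA : t / (1 + t) < 1 := by
          rw [div_lt_one h1']; linarith
        simp only [g2, if_pos hA]
        have : t / (1 + t) / (1 - t / (1 + t)) = t := by field_simp; ring
        rw [this]
      · have ht : t < -1 := lt_of_le_of_ne (not_lt.mp h2) h1
        have hne : (1 : ℚ) + t ≠ 0 := by intro h; nlinarith
        have h1' : (1:ℚ) + t < 0 := by linarith
        have hA : ¬ t / (1 + t) < 1 := by
          rw [not_lt, le_div_iff_of_neg h1']; linarith
        have hA2 : t / (1 + t) ≠ 1 := by
          intro h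
          have := (div_eq_iff hne).mp h
          linarith
        simp only [g2, if_neg hA, if_neg hA2]
        have : t / (1 + t) / (1 - t / (1 + t)) = t := by field_simp; ring
        rw [this]
        simp⟩

lemma braid_pt : ∀ p : P, g1 (g2 (g1 p)) = g2 (g1 (g2 p)) := by
  rintro ⟨k, _ | t⟩
  · norm_num [g1, g2]
  · rcases lt_trichotomy t 0 with ht | rfl | ht
    · have h1t : (1:ℚ) - t ≠ 0 := by intro h; rw [sub_eq_zero] at h; linarith
      have hu : t / (1 - t) < 0 := div_neg_of_neg_of_pos ht (by linarith)
      simp only [g1, g2, if_pos (show t + 1 < 1 by linarith),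
        if_pos (show t < 1 by linarith),
        if_pos (show t / (1 - t) + 1 < 1 by linarith)]
      simp only [Prod.mk.injEq, Option.some.injEq, true_and]
      have h2 : (1:ℚ) - (t + 1) ≠ 0 := by intro h; apply ht.ne; linarith
      have h3 : (1:ℚ) - (t / (1 - t) + 1) ≠ 0 := by intro h; apply hu.ne; linarith
      have ht0 : t ≠ 0 := by intro h; rw [h] at hu; norm_num at hu
      field_simp
      rw [eq_div_iff (by intro h; apply ht0; linarith)]; ring
    · norm_num [g1, g2]
    · rcases lt_trichotomy t 1 with ht1 | rfl | ht1
      · have h1t : (1:ℚ) - t ≠ 0 := by intro h; rw [sub_eq_zero] at h; linarith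
        have hu : 0 < t / (1 - t) := div_pos ht (by linarith)
        simp only [g1, g2, if_neg (show ¬ t + 1 < 1 by linarith),
          if_neg (show ¬ t + 1 = 1 by intro h; apply ht.ne'; linarith),
          if_pos (show t < 1 by linarith),
          if_neg (show ¬ t / (1 - t) + 1 < 1 by linarith),
          if_neg (show ¬ t / (1 - t) + 1 = 1 by intro h; apply hu.ne'; linarith)]
        simp only [Prod.mk.injEq, Option.some.injEq, true_and]
        have h2 : (1:ℚ) - (t + 1) ≠ 0 := by intro h; apply ht.ne'; linarith
        have h3 : (1:ℚ) - (t / (1 - t) + 1) ≠ 0 := by intro h; apply hu.ne; linarith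
        have ht0 : t ≠ 0 := by intro h; rw [h] at hu; norm_num at hu
        field_simp
        rw [eq_div_iff (by intro h; apply ht0; linarith)]; ring
      · norm_num [g1, g2]
      · have h1t : (1:ℚ) - t ≠ 0 := by intro h; rw [sub_eq_zero] at h; linarith
        have hu : t / (1 - t) < 0 := div_neg_of_pos_of_neg (by linarith) (by linarith)
        simp only [g1, g2, if_neg (show ¬ t + 1 < 1 by linarith),
          if_neg (show ¬ t + 1 = 1 by intro h; linarith),
          if_neg (show ¬ t < 1 by linarith),
          if_neg (show ¬ t = 1 by intro h; linarith),
          if_pos (show t / (1 - t) + 1 < 1 by linarith)]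
        simp only [Prod.mk.injEq, Option.some.injEq, true_and]
        have h2 : (1:ℚ) - (t + 1) ≠ 0 := by intro h; linarith
        have h3 : (1:ℚ) - (t / (1 - t) + 1) ≠ 0 := by intro h; apply hu.ne; linarith
        have ht0 : t ≠ 0 := by intro h; rw [h] at hu; norm_num at hu
        field_simp
        rw [eq_div_iff (by intro h; apply ht0; linarith)]; ring


lemma braid_s : s1 * s2 * s1 = s2 * s1 * s2 := by
  apply Equiv.ext
  intro p
  simp only [Equiv.Perm.mul_apply]
  exact braid_pt p

lemma le_g1 : ∀ p : P, xle p (g1 p) := by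
  rintro ⟨k, _ | t⟩
  · exact Or.inr ⟨rfl, trivial⟩
  · exact Or.inr ⟨rfl, by simp [g1, ole]⟩

lemma le_g2 : ∀ p : P, xle p (g2 p) := by
  rintro ⟨k, _ | t⟩
  · exact Or.inr ⟨rfl, trivial⟩
  · simp only [g2]
    split_ifs with h1 h2
    · refine Or.inr ⟨rfl, ?_⟩
      show t ≤ t / (1 - t)
      rw [le_div_iff₀ (by linarith)]
      nlinarith [sq_nonneg t]
    · exact Or.inl (by omega)
    · exact Or.inl (by omega)

lemma mono_g1 : ∀ p q : P, xle p q → xle (g1 p) (g1 q) := by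
  rintro ⟨k, _ | t⟩ ⟨k', _ | u⟩ h <;>
    rcases h with h | ⟨rfl, h2⟩ <;>
    simp_all [g1, xle, ole]

lemma aux_lt1 {t : ℚ} (h : t < 1) : -1 < t / (1 - t) := by
  rw [lt_div_iff₀ (by linarith : (0:ℚ) < 1 - t)]
  linarith

lemma aux_gt1 {t : ℚ} (h : 1 < t) : t / (1 - t) < -1 := by
  rw [div_lt_iff_of_neg (by linarith : (1:ℚ) - t < 0)]
  linarith

lemma aux_mono {t u : ℚ} (htu : t ≤ u) (hp : 0 < (1 - t) * (1 - u)) :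
    t / (1 - t) ≤ u / (1 - u) := by
  have h1 : (1:ℚ) - t ≠ 0 := by
    intro h; rw [h, zero_mul] at hp; exact lt_irrefl 0 hp
  have h2 : (1:ℚ) - u ≠ 0 := by
    intro h; rw [h, mul_zero] at hp; exact lt_irrefl 0 hp
  have key : u / (1 - u) - t / (1 - t) = (u - t) / ((1 - u) * (1 - t)) := by
    field_simp; ring
  have h3 : 0 ≤ (u - t) / ((1 - u) * (1 - t)) := by
    apply div_nonneg (by linarith)
    nlinarith
  linarith [key ▸ h3]

lemma g2_lt1 {t : ℚ} (h : t < 1) (k : ℤ) : g2 (k, some t) = (k, some (t / (1 - t))) := by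
  simp [g2, h]

lemma g2_eq1 (k : ℤ) : g2 (k, some 1) = (k + 1, none) := by norm_num [g2]

lemma g2_gt1 {t : ℚ} (h : 1 < t) (k : ℤ) : g2 (k, some t) = (k + 1, some (t / (1 - t))) := by
  rw [show g2 (k, some t) = if t < 1 then ((k : ℤ), some (t / (1 - t))) else if t = 1 then (k + 1, none) else (k + 1, some (t / (1 - t))) from rfl,
    if_neg (by linarith), if_neg (by linarith)]

lemma mono_g2 : ∀ p q : P, xle p q → xle (g2 p) (g2 q) := by
  rintro ⟨k, _ | t⟩ ⟨k', _ | u⟩ h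
  · -- none, none
    rcases h with h | ⟨rfl, _⟩
    · exact Or.inl h
    · exact Or.inr ⟨rfl, le_refl (-1 : ℚ)⟩
  · -- none, some u
    simp only [g2]
    split_ifs with h1 h2
    · rcases h with h | ⟨rfl, _⟩
      · exact Or.inl h
      · exact Or.inr ⟨rfl, le_of_lt (aux_lt1 h1)⟩
    · rcases h with h | ⟨rfl, _⟩
      · exact Or.inl (by omega)
      · exact Or.inl (by omega)
    · rcases h with h | ⟨rfl, _⟩
      · exact Or.inl (by omega)
      · exact Or.inl (by omega)
  · -- some t, none
    have hk : k < k' := by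
      rcases h with h | ⟨_, h2⟩
      · exact h
      · exact absurd h2 (by simp [ole])
    simp only [g2]
    split_ifs with h1 h2
    · exact Or.inl hk
    · rcases eq_or_lt_of_le (by omega : k + 1 ≤ k') with he | hl
      · exact Or.inr ⟨he, trivial⟩
      · exact Or.inl hl
    · rcases eq_or_lt_of_le (by omega : k + 1 ≤ k') with he | hl
      · exact Or.inr ⟨he, by simp [ole]; linarith [aux_gt1 (show (1:ℚ) < t by
          rcases lt_trichotomy t 1 with h | h | h
          · exact absurd h h1
          · exact absurd h h2
          · exact h)]⟩
      · exact Or.inl hl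
  · -- some t, some u
    rcases h with hk | ⟨rfl, htu⟩
    · rcases lt_trichotomy t 1 with ht | ht | ht <;>
        rcases lt_trichotomy u 1 with hu | hu | hu
      · rw [g2_lt1 ht, g2_lt1 hu]; exact Or.inl (by omega)
      · subst hu; rw [g2_lt1 ht, g2_eq1]; exact Or.inl (by omega)
      · rw [g2_lt1 ht, g2_gt1 hu]; exact Or.inl (by omega)
      · subst ht
        rw [g2_eq1, g2_lt1 hu]
        rcases eq_or_lt_of_le (by omega : k + 1 ≤ k') with he | hl
        · exact Or.inr ⟨he, trivial⟩
        · exact Or.inl hl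
      · subst ht; subst hu; rw [g2_eq1, g2_eq1]; exact Or.inl (by omega)
      · subst ht; rw [g2_eq1, g2_gt1 hu]; exact Or.inl (by omega)
      · rw [g2_gt1 ht, g2_lt1 hu]
        rcases eq_or_lt_of_le (by omega : k + 1 ≤ k') with he | hl
        · refine Or.inr ⟨he, ?_⟩
          show t / (1 - t) ≤ u / (1 - u)
          linarith [aux_gt1 ht, aux_lt1 hu]
        · exact Or.inl hl
      · subst hu; rw [g2_gt1 ht, g2_eq1]; exact Or.inl (by omega)
      · rw [g2_gt1 ht, g2_gt1 hu]; exact Or.inl (by omega)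
    · have htu' : t ≤ u := by simpa [ole] using htu
      rcases lt_trichotomy t 1 with ht | ht | ht <;>
        rcases lt_trichotomy u 1 with hu | hu | hu
      · rw [g2_lt1 ht, g2_lt1 hu]
        exact Or.inr ⟨rfl, aux_mono htu' (by nlinarith)⟩
      · subst hu; rw [g2_lt1 ht, g2_eq1]; exact Or.inl (by omega)
      · rw [g2_lt1 ht, g2_gt1 hu]; exact Or.inl (by omega)
      · exact absurd (ht ▸ htu') (by linarith)
      · subst ht; subst hu; rw [g2_eq1]; exact Or.inr ⟨rfl, trivial⟩
      · subst ht; rw [g2_eq1, g2_gt1 hu]; exact Or.inr ⟨rfl, trivial⟩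
      · exact absurd htu' (by linarith)
      · exact absurd htu' (by linarith)
      · rw [g2_gt1 ht, g2_gt1 hu]
        exact Or.inr ⟨rfl, aux_mono htu' (by nlinarith)⟩
lemma mono_symm (e : Equiv.Perm P) (he : ∀ p q, xle p q → xle (e p) (e q)) :
    ∀ p q, xle p q → xle (e.symm p) (e.symm q) := by
  intro p q h
  rcases xle_total (e.symm p) (e.symm q) with h' | h'
  · exact h'
  · have h2 := he _ _ h'
    rw [Equiv.apply_symm_apply, Equiv.apply_symm_apply] at h2
    have h3 : p = q := xle_antisymm h h2
    subst h3
    exact xle_refl _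

def fgen : Fin 2 → Equiv.Perm P := ![s1, s2]

lemma hrel : ∀ r ∈ braidRel, FreeGroup.lift fgen r = 1 := by
  intro r hr
  simp only [braidRel, Set.mem_singleton_iff] at hr
  subst hr
  simp only [map_mul, map_inv, FreeGroup.lift_apply_of, fgen]
  simp only [Matrix.cons_val_zero, Matrix.cons_val_one, Matrix.head_cons]
  rw [mul_inv_eq_one]
  exact braid_s

def Φ : B₃ →* Equiv.Perm P := PresentedGroup.toGroup hrel

lemma Φ_σ₁ : Φ σ₁ = s1 := by
  show Φ (PresentedGroup.of 0) = s1
  rw [Φ, PresentedGroup.toGroup.of]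
  rfl

lemma Φ_σ₂ : Φ σ₂ = s2 := by
  show Φ (PresentedGroup.of 1) = s2
  rw [Φ, PresentedGroup.toGroup.of]
  rfl

lemma mono_Φ (β : B₃) : ∀ p q, xle p q → xle (Φ β p) (Φ β q) := by
  obtain ⟨z, rfl⟩ := PresentedGroup.mk_surjective braidRel β
  induction z using FreeGroup.induction_on with
  | C1 => simp only [map_one]; intro p q h; simpa using h
  | of x =>
    have : PresentedGroup.mk braidRel (FreeGroup.of x) = PresentedGroup.of x := rfl
    rw [this]
    have : Φ (PresentedGroup.of x) = fgen x := PresentedGroup.toGroup.of hrel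
    rw [this]
    fin_cases x
    · exact mono_g1
    · exact mono_g2
  | inv_of x ih =>
    rw [map_inv, map_inv]
    intro p q h
    have : (Φ (PresentedGroup.mk braidRel (FreeGroup.of x)))⁻¹ = (Φ (PresentedGroup.mk braidRel (FreeGroup.of x))).symm := rfl
    rw [this]
    exact mono_symm _ ih p q h
  | mul x y ihx ihy =>
    rw [map_mul, map_mul]
    intro p q h
    exact ihx _ _ (ihy _ _ h)

lemma le_Φ_gen {g : B₃} (hg : g = σ₁ ∨ g = σ₂) (p : P) : xle p (Φ g p) := by
  rcases hg with rfl | rfl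
  · rw [Φ_σ₁]; exact le_g1 p
  · rw [Φ_σ₂]; exact le_g2 p

lemma le_Φ_conj (c g : B₃) (hg : g = σ₁ ∨ g = σ₂) (p : P) :
    xle p (Φ (c * g * c⁻¹) p) := by
  rw [map_mul, map_mul, map_inv]
  simp only [Equiv.Perm.mul_apply]
  have h1 : xle ((Φ c)⁻¹ p) (Φ g ((Φ c)⁻¹ p)) := le_Φ_gen hg _
  have h2 := mono_Φ c _ _ h1
  rwa [show (Φ c) ((Φ c)⁻¹ p) = p from (Φ c).apply_symm_apply p] at h2

lemma le_Φ_prod (l : List (B₃ × B₃)) (hl : ∀ q ∈ l, q.2 = σ₁ ∨ q.2 = σ₂) :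
    ∀ p, xle p (Φ ((l.map fun q => q.1 * q.2 * q.1⁻¹).prod) p) := by
  induction l with
  | nil => intro p; simpa using xle_refl p
  | cons hd tl ih =>
    intro p
    rw [List.map_cons, List.prod_cons, map_mul, Equiv.Perm.mul_apply]
    have h1 := ih (fun q hq => hl q (List.mem_cons_of_mem _ hq)) p
    exact xle_trans h1 (le_Φ_conj hd.1 hd.2 (hl hd List.mem_cons_self) _)

lemma le_Φ_qp {β : B₃} (h : Quasipositive β) (p : P) : xle p (Φ β p) := by
  obtain ⟨l, hl, rfl⟩ := h
  exact le_Φ_prod l hl p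

lemma s1_pow (n : ℕ) (k : ℤ) (t : ℚ) : (s1 ^ n) ((k, some t) : P) = (k, some (t + n)) := by
  induction n generalizing t with
  | zero => simp
  | succ m ih =>
    rw [pow_succ, Equiv.Perm.mul_apply]
    have h1 : s1 ((k, some t) : P) = (k, some (t + 1)) := rfl
    rw [h1, ih]
    simp only [Prod.mk.injEq, Option.some.injEq, true_and]
    push_cast
    ring

lemma s2_fix (n : ℕ) (k : ℤ) : (s2 ^ n) ((k, some 0) : P) = (k, some 0) := by
  induction n with
  | zero => simp
  | succ m ih =>
    rw [pow_succ, Equiv.Perm.mul_apply]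
    have : s2 ((k, some 0) : P) = (k, some 0) := by norm_num [s2, g2]
    rw [this, ih]

lemma no_qp (A B : ℕ) : ¬ Quasipositive (σ₁ ^ A * σ₂ ^ B * Δ ^ (-2 : ℤ)) := by
  intro h
  have key := le_Φ_qp h ((0 : ℤ), some (0 : ℚ))
  have hD : Φ Δ = s1 * s2 * s1 := by
    rw [Δ, map_mul, map_mul, Φ_σ₁, Φ_σ₂]
  have hq0 : (Φ Δ ^ (2:ℕ)) (((-1 : ℤ), some (0 : ℚ)) : P) = ((0 : ℤ), some (0 : ℚ)) := by
    rw [pow_two, hD]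
    simp only [Equiv.Perm.mul_apply]
    norm_num [s1, s2, g1, g2, Equiv.coe_fn_mk]
  have hinv : (Φ Δ ^ (-2 : ℤ)) (((0:ℤ), some (0:ℚ)) : P) = ((-1 : ℤ), some (0:ℚ)) := by
    rw [zpow_neg, show ((2:ℤ) = ((2:ℕ) : ℤ)) from rfl, zpow_natCast]
    rw [← hq0]
    exact (Φ Δ ^ (2:ℕ)).symm_apply_apply _
  rw [map_mul, map_mul, map_zpow, map_pow, map_pow, Φ_σ₁, Φ_σ₂] at key
  simp only [Equiv.Perm.mul_apply] at key
  rw [hinv, s2_fix, s1_pow] at key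
  rcases key with h' | ⟨h', _⟩ <;> omega

end Orevkov

/-- Block-count bound for quasipositive 3-braids with Δ-exponent −2: if
(∏ᵢ σ₁^{aᵢ} σ₂^{bᵢ})·Δ⁻² with all aᵢ, bᵢ ≥ 2 is quasipositive, then s ≥ 2. -/
theorem block_count_bound (s : ℕ) (hs : 1 ≤ s) (a b : Fin s → ℕ)
    (ha : ∀ i, 2 ≤ a i) (hb : ∀ i, 2 ≤ b i)
    (hqp : Quasipositive
      ((List.ofFn fun i => σ₁ ^ a i * σ₂ ^ b i).prod * Δ ^ (-2 : ℤ))) :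
    2 ≤ s := by
  by_contra hlt
  have hs1 : s = 1 := by omega
  subst hs1
  have : (List.ofFn fun i : Fin 1 => σ₁ ^ a i * σ₂ ^ b i) = [σ₁ ^ a 0 * σ₂ ^ b 0] := by
    simp [List.ofFn_succ]
  rw [this] at hqp
  simp only [List.prod_cons, List.prod_nil, mul_one] at hqp
  exact Orevkov.no_qp (a 0) (b 0) hqp
end
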